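/- arXiv:1007.4779 — 2 statements merged into one kernel-verified Lean document; each statement's English description precedes it below -/
import Mathlib

section
/- Let F be a field of characteristic zero, n ≥ 1, and let U_n be the operator on F[x_1,…,x_n] given by U_n f = (1/2)·Σ_{i=1}^n x_i²·∂²f/∂x_i². For every partition λ = (λ_1,…,λ_s) with positive parts, U_n p_λ = (1/2)·(Σ_{k=1}^s λ_k(λ_k−1))·p_λ + (1/2)·Σ_{(j,k): j≠k} λ_j·λ_k·p_{λ_j+λ_k}·∏_{m∉{j,k}} p_{λ_m}, where the second sum runs over ordered pairs (j,k) with 1 ≤ j,k ≤ s and j ≠ k. -/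
open Finset MvPolynomial

variable {F : Type*} [Field F] [CharZero F] (n : ℕ)

noncomputable def psumP (r : ℕ) : MvPolynomial (Fin n) F :=
  ∑ i : Fin n, X i ^ r

noncomputable def Un (f : MvPolynomial (Fin n) F) : MvPolynomial (Fin n) F :=
  C (1 / 2 : F) * ∑ i : Fin n, X i ^ 2 * pderiv i (pderiv i f)

lemma pderiv_finset_prod {ι : Type*} [DecidableEq ι] (i : Fin n) (u : Finset ι)
    (f : ι → MvPolynomial (Fin n) F) :
    pderiv i (∏ m ∈ u, f m) = ∑ j ∈ u, pderiv i (f j) * ∏ m ∈ u.erase j, f m := by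
  induction u using Finset.induction_on with
  | empty => simp [pderiv_one]
  | insert a t ha ih =>
    rw [Finset.prod_insert ha, pderiv_mul, ih, Finset.sum_insert ha,
      Finset.erase_insert ha, Finset.mul_sum]
    congr 1
    refine Finset.sum_congr rfl fun j hj => ?_
    rw [Finset.erase_insert_of_ne]
    · rw [Finset.prod_insert (fun h => ha (Finset.mem_of_mem_erase h))]
      ring
    · exact fun h => ha (h ▸ hj)

lemma pderiv_psumP (i : Fin n) (r : ℕ) :
    pderiv i (psumP n r : MvPolynomial (Fin n) F) = C (r : F) * X i ^ (r - 1) := by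
  unfold psumP
  rw [map_sum, Finset.sum_eq_single i]
  · rw [pderiv_pow, pderiv_X_self, mul_one, map_natCast]
  · intro b _ hb
    rw [pderiv_pow, pderiv_X_of_ne hb, mul_zero]
  · simp

lemma sum_sq_dd (r : ℕ) :
    ∑ i : Fin n, (X i : MvPolynomial (Fin n) F) ^ 2 * pderiv i (pderiv i (psumP n r)) =
      C ((r * (r - 1) : ℕ) : F) * psumP n r := by
  have h : ∀ i : Fin n, (X i : MvPolynomial (Fin n) F) ^ 2 * pderiv i (pderiv i (psumP n r)) =
      C ((r * (r - 1) : ℕ) : F) * X i ^ r := by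
    intro i
    rw [pderiv_psumP, pderiv_C_mul, pderiv_pow, pderiv_X_self, mul_one]
    match r with
    | 0 => simp
    | 1 => simp
    | (r + 2) =>
      simp only [Nat.add_sub_cancel, Nat.succ_sub_one, map_natCast]
      push_cast
      ring
  rw [Finset.sum_congr rfl (fun i _ => h i), ← Finset.mul_sum]
  rfl

lemma sum_sq_dd2 (a b : ℕ) (ha : 1 ≤ a) (hb : 1 ≤ b) :
    ∑ i : Fin n, (X i : MvPolynomial (Fin n) F) ^ 2 *
      (pderiv i (psumP n a) * pderiv i (psumP n b)) =
      C ((a * b : ℕ) : F) * psumP n (a + b) := by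
  obtain ⟨a, rfl⟩ : ∃ a', a = a' + 1 := ⟨a - 1, (Nat.succ_pred_eq_of_pos ha).symm⟩
  obtain ⟨b, rfl⟩ : ∃ b', b = b' + 1 := ⟨b - 1, (Nat.succ_pred_eq_of_pos hb).symm⟩
  have h : ∀ i : Fin n, (X i : MvPolynomial (Fin n) F) ^ 2 *
      (pderiv i (psumP n (a + 1)) * pderiv i (psumP n (b + 1))) =
      C (((a + 1) * (b + 1) : ℕ) : F) * X i ^ (a + 1 + (b + 1)) := by
    intro i
    rw [pderiv_psumP, pderiv_psumP]
    simp only [Nat.add_sub_cancel, map_natCast]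
    rw [show a + 1 + (b + 1) = 2 + a + b by ring, pow_add, pow_add]
    push_cast
    ring
  rw [Finset.sum_congr rfl (fun i _ => h i), ← Finset.mul_sum]
  rfl

lemma sum_offDiag_eq {ι M : Type*} [DecidableEq ι] [AddCommMonoid M] (u : Finset ι)
    (f : ι × ι → M) :
    ∑ p ∈ u.offDiag, f p = ∑ j ∈ u, ∑ k ∈ u.erase j, f (j, k) := by
  rw [show u.offDiag = (u ×ˢ u).filter (fun a : ι × ι => a.1 ≠ a.2) by ext; simp [and_assoc], Finset.sum_filter, Finset.sum_product]
  refine Finset.sum_congr rfl fun j hj => ?_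
  rw [← Finset.sum_filter]
  congr 1
  ext k
  simp only [Finset.mem_filter, Finset.mem_erase]
  tauto

lemma erase_erase_eq {ι : Type*} [DecidableEq ι] (u : Finset ι) (j k : ι) :
    (u.erase j).erase k = u \ {j, k} := by
  ext m
  simp only [Finset.mem_erase, Finset.mem_sdiff, Finset.mem_insert, Finset.mem_singleton]
  tauto

/-- The action of `U_n` on the power sums `p_λ`. -/
theorem Un_powerSum (hn : 1 ≤ n) (s : ℕ) (lam : Fin s → ℕ)
    (hpos : ∀ j, 0 < lam j) (hdec : Antitone lam) :
    Un n (∏ m : Fin s, psumP n (lam m)) =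
      C ((1 / 2 : F) * ∑ m : Fin s, (lam m * (lam m - 1) : ℕ)) *
          ∏ m : Fin s, psumP n (lam m) +
        C (1 / 2 : F) * ∑ p ∈ Finset.univ.offDiag,
          C ((lam p.1 * lam p.2 : ℕ) : F) * psumP n (lam p.1 + lam p.2) *
            ∏ m ∈ Finset.univ \ {p.1, p.2}, psumP n (lam m) := by
  classical
  have key : ∑ i : Fin n, (X i : MvPolynomial (Fin n) F) ^ 2 *
      pderiv i (pderiv i (∏ m : Fin s, psumP n (lam m))) =
      C ((∑ m : Fin s, (lam m * (lam m - 1) : ℕ) : ℕ) : F) * ∏ m : Fin s, psumP n (lam m) +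
      ∑ p ∈ (Finset.univ : Finset (Fin s)).offDiag,
        C ((lam p.1 * lam p.2 : ℕ) : F) * psumP n (lam p.1 + lam p.2) *
          ∏ m ∈ Finset.univ \ {p.1, p.2}, psumP n (lam m) := by
    have step : ∀ i : Fin n,
        pderiv i (pderiv i (∏ m : Fin s, (psumP n (lam m) : MvPolynomial (Fin n) F))) =
        (∑ j : Fin s, pderiv i (pderiv i (psumP n (lam j))) *
            ∏ m ∈ Finset.univ.erase j, psumP n (lam m)) +
        ∑ j : Fin s, ∑ k ∈ Finset.univ.erase j,
          pderiv i (psumP n (lam j)) * (pderiv i (psumP n (lam k)) *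
            ∏ m ∈ (Finset.univ.erase j).erase k, psumP n (lam m)) := by
      intro i
      rw [pderiv_finset_prod, map_sum]
      have hterm : ∀ j : Fin s,
          pderiv i (pderiv i (psumP n (lam j)) *
              ∏ m ∈ Finset.univ.erase j, (psumP n (lam m) : MvPolynomial (Fin n) F)) =
          pderiv i (pderiv i (psumP n (lam j))) * ∏ m ∈ Finset.univ.erase j, psumP n (lam m) +
          ∑ k ∈ Finset.univ.erase j, pderiv i (psumP n (lam j)) *
            (pderiv i (psumP n (lam k)) *
              ∏ m ∈ (Finset.univ.erase j).erase k, psumP n (lam m)) := by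
        intro j
        rw [pderiv_mul, pderiv_finset_prod, Finset.mul_sum]
      rw [Finset.sum_congr rfl fun j _ => hterm j, Finset.sum_add_distrib]
    simp only [step, mul_add, Finset.mul_sum]
    rw [Finset.sum_add_distrib]
    congr 1
    · rw [Finset.sum_comm]
      have h1 : ∀ j : Fin s, ∑ i : Fin n, (X i : MvPolynomial (Fin n) F) ^ 2 *
          (pderiv i (pderiv i (psumP n (lam j))) * ∏ m ∈ Finset.univ.erase j, psumP n (lam m)) =
          C ((lam j * (lam j - 1) : ℕ) : F) * ∏ m : Fin s, psumP n (lam m) := by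
        intro j
        have : ∀ i : Fin n, (X i : MvPolynomial (Fin n) F) ^ 2 *
            (pderiv i (pderiv i (psumP n (lam j))) * ∏ m ∈ Finset.univ.erase j, psumP n (lam m)) =
            (X i : MvPolynomial (Fin n) F) ^ 2 * pderiv i (pderiv i (psumP n (lam j))) *
              ∏ m ∈ Finset.univ.erase j, psumP n (lam m) := fun i => by ring
        rw [Finset.sum_congr rfl fun i _ => this i, ← Finset.sum_mul, sum_sq_dd, mul_assoc]
        congr 1
        exact Finset.mul_prod_erase Finset.univ (fun m => (psumP n (lam m) : MvPolynomial (Fin n) F))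
          (Finset.mem_univ j)
      rw [Finset.sum_congr rfl fun j _ => h1 j, ← Finset.sum_mul]
      congr 1
      rw [← map_sum]
      congr 1
      push_cast
      rfl
    · rw [Finset.sum_comm, sum_offDiag_eq]
      refine Finset.sum_congr rfl fun j _ => ?_
      rw [Finset.sum_comm]
      refine Finset.sum_congr rfl fun k hk => ?_
      have h2 : ∀ i : Fin n, (X i : MvPolynomial (Fin n) F) ^ 2 *
          (pderiv i (psumP n (lam j)) * (pderiv i (psumP n (lam k)) *
            ∏ m ∈ (Finset.univ.erase j).erase k, psumP n (lam m))) =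
          (X i : MvPolynomial (Fin n) F) ^ 2 *
            (pderiv i (psumP n (lam j)) * pderiv i (psumP n (lam k))) *
            ∏ m ∈ (Finset.univ.erase j).erase k, psumP n (lam m) := fun i => by ring
      rw [Finset.sum_congr rfl fun i _ => h2 i, ← Finset.sum_mul,
        sum_sq_dd2 n _ _ (hpos j) (hpos k), erase_erase_eq]
  unfold Un
  rw [key, mul_add]
  congr 1
  rw [← mul_assoc, ← C_mul]
end

section
/- Let t > 1 be a real number and r ≥ 1 an integer. Then Σ_{μ⊢r} (1/z_μ)·∏_{j=1}^{ℓ(μ)} (1 − t^{−μ_j}) = 1 − t^{−1}, where the sum is over all partitions μ of r. Equivalently, π_{∞,t} is a probability distribution on the partitions of r: Σ_{μ⊢r} π_{∞,t}(μ) = 1. -/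
open Finset

/-- `z_μ = ∏_i i^{a_i(μ)} a_i(μ)!` for a multiset of parts. -/
def zWeight (m : Multiset ℕ) : ℕ :=
  ∏ i ∈ m.toFinset, i ^ m.count i * (m.count i).factorial

/-- `π_{∞,t}` evaluated on a multiset of parts. -/
noncomputable def piInf (t : ℝ) (m : Multiset ℕ) : ℝ :=
  (t / (t - 1)) * ((zWeight m : ℝ))⁻¹ * (m.map (fun p => 1 - t⁻¹ ^ p)).prod

lemma zWeight_cons (k : ℕ) (m : Multiset ℕ) :
    zWeight (k ::ₘ m) = k * (m.count k + 1) * zWeight m := by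
  unfold zWeight
  rw [Multiset.toFinset_cons]
  by_cases h : k ∈ m.toFinset
  · rw [Finset.insert_eq_self.2 h, ← Finset.mul_prod_erase _ _ h, ← Finset.mul_prod_erase _ _ h]
    have hc : ∀ i ∈ m.toFinset.erase k,
        i ^ (k ::ₘ m).count i * ((k ::ₘ m).count i).factorial
          = i ^ m.count i * (m.count i).factorial := by
      intro i hi
      rw [Multiset.count_cons_of_ne (Finset.ne_of_mem_erase hi)]
    rw [Finset.prod_congr rfl hc, Multiset.count_cons_self, pow_succ, Nat.factorial_succ]
    ring
  · rw [Finset.prod_insert h, Multiset.count_cons_self,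
      Multiset.count_eq_zero.2 (by simpa using h)]
    have hc : ∀ i ∈ m.toFinset,
        i ^ (k ::ₘ m).count i * ((k ::ₘ m).count i).factorial
          = i ^ m.count i * (m.count i).factorial := by
      intro i hi
      rw [Multiset.count_cons_of_ne (by rintro rfl; exact h hi)]
    rw [Finset.prod_congr rfl hc]
    simp

/-- The `f`-weighted sum over partitions of `n`. -/
noncomputable def Spart (f : ℕ → ℝ) (n : ℕ) : ℝ :=
  ∑ μ : Nat.Partition n, ((zWeight μ.parts : ℝ))⁻¹ * (μ.parts.map f).prod

lemma Spart_zero (f : ℕ → ℝ) : Spart f 0 = 1 := by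
  rw [Spart, Finset.univ_unique, Finset.sum_singleton]
  simp [zWeight]

lemma part_bij (k n : ℕ) (hk : 0 < k) (g : Multiset ℕ → ℝ) :
    (∑ μ : Nat.Partition (n + k), if k ∈ μ.parts then g μ.parts else 0)
      = ∑ ν : Nat.Partition n, g (k ::ₘ ν.parts) := by
  rw [← Finset.sum_filter]
  refine Finset.sum_bij'
    (i := fun μ (hμ : μ ∈ Finset.univ.filter fun μ => k ∈ μ.parts) =>
      (⟨μ.parts.erase k,
        fun hi => μ.parts_pos (Multiset.mem_of_mem_erase hi), ?_⟩ : Nat.Partition n))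
    (j := fun ν _ =>
      (⟨k ::ₘ ν.parts,
        fun hi => by
          rcases Multiset.mem_cons.1 hi with h | h
          exacts [h ▸ hk, ν.parts_pos h], by simp [ν.parts_sum, Nat.add_comm]⟩ :
        Nat.Partition (n + k)))
    (fun _ _ => Finset.mem_univ _) ?_ ?_ ?_ ?_
  · have hm : k ∈ μ.parts := by simpa using hμ
    have := congrArg Multiset.sum (Multiset.cons_erase hm)
    rw [Multiset.sum_cons, μ.parts_sum] at this
    omega
  · intro ν _
    simp
  · intro μ hμ
    have hm : k ∈ μ.parts := by simpa using hμ
    exact Nat.Partition.ext (Multiset.cons_erase hm)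
  · intro ν _
    exact Nat.Partition.ext (Multiset.erase_cons_head k ν.parts)
  · intro μ hμ
    have hm : k ∈ μ.parts := by simpa using hμ
    exact congrArg g (Multiset.cons_erase hm).symm

lemma Spart_rec (f : ℕ → ℝ) (r : ℕ) :
    (r : ℝ) * Spart f r = ∑ k ∈ Icc 1 r, f k * Spart f (r - k) := by
  have hsum : ∀ μ : Nat.Partition r, ∑ k ∈ Icc 1 r, μ.parts.count k * k = r := by
    intro μ
    have hsub : μ.parts.toFinset ⊆ Icc 1 r := by
      intro p hp
      rw [Multiset.mem_toFinset] at hp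
      refine Finset.mem_Icc.2 ⟨μ.parts_pos hp, ?_⟩
      calc p ≤ μ.parts.sum := Multiset.single_le_sum (fun _ _ => Nat.zero_le _) _ hp
        _ = r := μ.parts_sum
    have hz : ∀ x ∈ Icc 1 r, x ∉ μ.parts.toFinset → μ.parts.count x * x = 0 := by
      intro x _ hx
      simp [Multiset.count_eq_zero.2 (fun h => hx (Multiset.mem_toFinset.2 h))]
    rw [← Finset.sum_subset hsub hz]
    have := Finset.sum_multiset_map_count μ.parts (id : ℕ → ℕ)
    simp only [Multiset.map_id', smul_eq_mul, id] at this
    rw [← this, μ.parts_sum]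
  rw [Spart, Finset.mul_sum]
  have step1 : ∀ μ : Nat.Partition r,
      (r : ℝ) * (((zWeight μ.parts : ℝ))⁻¹ * (μ.parts.map f).prod)
        = ∑ k ∈ Icc 1 r, (μ.parts.count k * k : ℝ) *
            (((zWeight μ.parts : ℝ))⁻¹ * (μ.parts.map f).prod) := by
    intro μ
    rw [← Finset.sum_mul]
    congr 1
    calc (r : ℝ) = ((∑ k ∈ Icc 1 r, μ.parts.count k * k : ℕ) : ℝ) := by rw [hsum μ]
      _ = _ := by push_cast; ring
  rw [Finset.sum_congr rfl fun μ _ => step1 μ, Finset.sum_comm]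
  refine Finset.sum_congr rfl fun k hk => ?_
  rw [Finset.mem_Icc] at hk
  obtain ⟨n, rfl⟩ : ∃ n, r = n + k := ⟨r - k, by omega⟩
  have h2 : n + k - k = n := by omega
  rw [h2]
  have hterm : ∀ μ : Nat.Partition (n + k),
      (μ.parts.count k * k : ℝ) * (((zWeight μ.parts : ℝ))⁻¹ * (μ.parts.map f).prod)
        = if k ∈ μ.parts then
            (μ.parts.count k * k : ℝ) * (((zWeight μ.parts : ℝ))⁻¹ * (μ.parts.map f).prod)
          else 0 := by
    intro μ
    split_ifs with h
    · rfl
    · rw [Multiset.count_eq_zero.2 h]; simp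
  rw [Finset.sum_congr rfl fun μ _ => hterm μ,
    part_bij k n (by omega) (fun m => (m.count k * k : ℝ) *
      (((zWeight m : ℝ))⁻¹ * (m.map f).prod))]
  rw [Spart, Finset.mul_sum]
  refine Finset.sum_congr rfl fun ν _ => ?_
  rw [Multiset.count_cons_self, zWeight_cons, Multiset.map_cons, Multiset.prod_cons]
  have hz0 : (zWeight ν.parts : ℝ) ≠ 0 := by
    have : 0 < zWeight ν.parts := by
      refine Finset.prod_pos fun i hi => ?_
      have := ν.parts_pos (Multiset.mem_toFinset.1 hi)
      positivity
    positivity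
  have hk0 : (k : ℝ) ≠ 0 := by
    have : 0 < k := by omega
    positivity
  have hc0 : ((ν.parts.count k : ℝ) + 1) ≠ 0 := by positivity
  push_cast
  field_simp

lemma Spart_eq (q : ℝ) (hq : q ≠ 1) :
    ∀ r : ℕ, 1 ≤ r → Spart (fun p => 1 - q ^ p) r = 1 - q := by
  intro r
  induction r using Nat.strong_induction_on with
  | _ r ih =>
    intro hr
    set f : ℕ → ℝ := fun p => 1 - q ^ p with hf
    have hrec := Spart_rec f r
    have hIcc : Icc 1 r = insert r (Icc 1 (r - 1)) := by
      ext x; simp only [Finset.mem_Icc, Finset.mem_insert]; omega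
    have hnot : r ∉ Icc 1 (r - 1) := by simp only [Finset.mem_Icc]; omega
    rw [hIcc, Finset.sum_insert hnot, Nat.sub_self, Spart_zero] at hrec
    have hsmall : ∀ k ∈ Icc 1 (r - 1), f k * Spart f (r - k) = f k * (1 - q) := by
      intro k hk
      rw [Finset.mem_Icc] at hk
      rw [ih (r - k) (by omega) (by omega)]
    rw [Finset.sum_congr rfl hsmall] at hrec
    have hIco : Icc 1 (r - 1) = Ico 1 r := by
      ext x; simp only [Finset.mem_Icc, Finset.mem_Ico]; omega
    have hgs : ∑ k ∈ Ico 1 r, q ^ k = (q ^ r - q ^ 1) / (q - 1) := geom_sum_Ico hq hr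
    have hcard : (Ico 1 r).card = r - 1 := by simp
    have hsum2 : ∑ k ∈ Icc 1 (r - 1), f k * (1 - q)
        = ((r : ℝ) - 1) * (1 - q) - ((q ^ r - q ^ 1) / (q - 1)) * (1 - q) := by
      rw [hIco]
      have : ∀ k, f k * (1 - q) = (1 - q) - q ^ k * (1 - q) := by
        intro k; rw [hf]; ring
      rw [Finset.sum_congr rfl fun k _ => this k, Finset.sum_sub_distrib,
        Finset.sum_const, ← Finset.sum_mul, hgs, hcard]
      have : ((r - 1 : ℕ) : ℝ) = (r : ℝ) - 1 := by
        push_cast [Nat.cast_sub hr]; ring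
      rw [nsmul_eq_mul, this]
    rw [hsum2] at hrec
    have hr0 : (r : ℝ) ≠ 0 := by
      have : 0 < r := hr
      positivity
    have hq1 : q - 1 ≠ 0 := sub_ne_zero.2 hq
    have key : (r : ℝ) * Spart f r = (r : ℝ) * (1 - q) := by
      rw [hrec, hf]
      field_simp
      ring
    exact mul_left_cancel₀ hr0 key

/-- `Σ_{μ⊢r} (1/z_μ) ∏_j (1-t^{-μ_j}) = 1 - t⁻¹`; equivalently `π_{∞,t}` is a
probability distribution on the partitions of `r`. -/
theorem piInf_normalized (t : ℝ) (ht : 1 < t) (r : ℕ) (hr : 1 ≤ r) :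
    (∑ μ : Nat.Partition r, ((zWeight μ.parts : ℝ))⁻¹ *
        (μ.parts.map (fun p => 1 - t⁻¹ ^ p)).prod) = 1 - t⁻¹ ∧
      (∑ μ : Nat.Partition r, piInf t μ.parts) = 1 := by
  have ht0 : t ≠ 0 := by positivity
  have hq : t⁻¹ ≠ 1 := by
    have : t⁻¹ < 1 := inv_lt_one_of_one_lt₀ ht
    linarith
  have h1 : (∑ μ : Nat.Partition r, ((zWeight μ.parts : ℝ))⁻¹ *
      (μ.parts.map (fun p => 1 - t⁻¹ ^ p)).prod) = 1 - t⁻¹ := Spart_eq t⁻¹ hq r hr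
  refine ⟨h1, ?_⟩
  have h2 : (∑ μ : Nat.Partition r, piInf t μ.parts)
      = (t / (t - 1)) * ∑ μ : Nat.Partition r, ((zWeight μ.parts : ℝ))⁻¹ *
          (μ.parts.map (fun p => 1 - t⁻¹ ^ p)).prod := by
    rw [Finset.mul_sum]
    exact Finset.sum_congr rfl fun μ _ => by rw [piInf]; ring
  rw [h2, h1]
  have ht1 : t - 1 ≠ 0 := by
    intro h; rw [sub_eq_zero] at h; exact (by linarith : (1:ℝ) < 1).false
  field_simp
end
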